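/- Let n ≥ 1 and let W_n' be the n-downlinked mutual dyad. Then over any field, β̃_2(W_n') = n − 1 and β̃_p(W_n') = 0 for all p ≥ 0 with p ≠ 2. -/

import Mathlib

open Finset

/-- The non-regular boundary operator `∂_[p] : R^{V^{p+1}} → R^{V^p}`.
It is the linear map acting on the standard basis by
`∂_[p] e_{(v_0,…,v_p)} = ∑_{j=0}^p (−1)^j e_{(v_0,…,v̂_j,…,v_p)}`,
where `v̂_j` means that the entry `v_j` is omitted from the tuple
(here `fun i => x (j.succAbove i)` is the tuple `x` with its `j`-th entry dropped). -/
noncomputable def pathBoundary (R V : Type) [CommRing R] [Fintype V] [DecidableEq V]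
    (p : ℕ) : ((Fin (p + 1) → V) → R) →ₗ[R] ((Fin p → V) → R) where
  toFun f := fun w => ∑ x : Fin (p + 1) → V,
    (∑ j : Fin (p + 1), (-1 : R) ^ (j : ℕ) *
      (if (fun i => x (j.succAbove i)) = w then 1 else 0)) * f x
  map_add' f g := by
    funext w
    simp [mul_add, Finset.sum_add_distrib]
  map_smul' r f := by
    funext w
    simp [Finset.mul_sum, mul_left_comm]

/-- A tuple of vertices is an allowed path when each consecutive pair is an arc. -/
def IsAllowed {V : Type} (A : V → V → Prop) {q : ℕ} (x : Fin q → V) : Prop :=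
  ∀ (i : ℕ) (h : i + 1 < q), A (x ⟨i, Nat.lt_of_succ_lt h⟩) (x ⟨i + 1, h⟩)

/-- `R^{𝒜}`: the subspace of `R^{V^q}` of functions supported on allowed paths
(`q` is the number of vertices in the tuple, so this is `R^{𝒜_{q-1}}`). -/
def allowedSubmodule (R V : Type) [CommRing R] (A : V → V → Prop) (q : ℕ) :
    Submodule R ((Fin q → V) → R) where
  carrier := {f | ∀ x, ¬ IsAllowed A x → f x = 0}
  add_mem' := fun hf hg x hx => by simp only [Pi.add_apply, hf x hx, hg x hx, add_zero]
  zero_mem' := fun x hx => rfl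
  smul_mem' := fun c f hf x hx => by simp only [Pi.smul_apply, hf x hx, smul_zero]

/-- `Ω_p`, the space of invariant `p`-paths:
`Ω_p = {ω ∈ R^{𝒜_p} : ∂_[p] ω ∈ R^{𝒜_{p−1}}}`. -/
noncomputable def invariantPaths (R V : Type) [CommRing R] [Fintype V] [DecidableEq V]
    (A : V → V → Prop) (p : ℕ) : Submodule R ((Fin (p + 1) → V) → R) :=
  allowedSubmodule R V A (p + 1) ⊓ (allowedSubmodule R V A p).comap (pathBoundary R V p)

/-- The cycles `Z_p = ker ∂_p` of the path complex `(Ω_p, ∂_p)`, `∂_p = ∂_[p]|_{Ω_p}`.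
In degree `0` the complex ends at `Ω_0` (the differential out of `Ω_0` is zero),
so `Z_0 = Ω_0`. -/
noncomputable def pathCycles (R V : Type) [CommRing R] [Fintype V] [DecidableEq V]
    (A : V → V → Prop) : (p : ℕ) → Submodule R ((Fin (p + 1) → V) → R)
  | 0 => invariantPaths R V A 0
  | p + 1 => invariantPaths R V A (p + 1) ⊓ LinearMap.ker (pathBoundary R V (p + 1))

/-- The boundaries `B_p = im ∂_{p+1} = ∂_[p+1](Ω_{p+1})`. -/
noncomputable def pathBoundaries (R V : Type) [CommRing R] [Fintype V] [DecidableEq V]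
    (A : V → V → Prop) (p : ℕ) : Submodule R ((Fin (p + 1) → V) → R) :=
  Submodule.map (pathBoundary R V (p + 1)) (invariantPaths R V A (p + 1))

/-- The path homology `H_p = Z_p / B_p` of the digraph `(V, A)` with coefficients in `R`. -/
abbrev pathHomology (R V : Type) [CommRing R] [Fintype V] [DecidableEq V]
    (A : V → V → Prop) (p : ℕ) : Type :=
  pathCycles R V A p ⧸ (pathBoundaries R V A p).comap (pathCycles R V A p).subtype

/-- The Betti numbers `β_p = dim H_p`. -/
noncomputable def betti (F V : Type) [Field F] [Fintype V] [DecidableEq V]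
    (A : V → V → Prop) (p : ℕ) : ℕ :=
  Module.finrank F (pathHomology F V A p)

/-- The reduced Betti numbers `β̃_p = β_p − δ_{p0}` (as integers). -/
noncomputable def tildeBetti (F V : Type) [Field F] [Fintype V] [DecidableEq V]
    (A : V → V → Prop) (p : ℕ) : ℤ :=
  (betti F V A p : ℤ) - (if p = 0 then 1 else 0)

/-- For `n ≥ 1`, the `n`-uplinked mutual dyad `W_n` has vertex set `{a, b, 1, …, n}`
(realized as `Fin 2 ⊕ Fin n`, with `a = Sum.inl 0` and `b = Sum.inl 1`) and arc set
`{(a,b), (b,a)} ∪ {(a,i) : 1 ≤ i ≤ n} ∪ {(b,i) : 1 ≤ i ≤ n}`. -/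
def uplinkArc (n : ℕ) : (Fin 2 ⊕ Fin n) → (Fin 2 ⊕ Fin n) → Prop
  | Sum.inl i, Sum.inl j => i ≠ j
  | Sum.inl _, Sum.inr _ => True
  | Sum.inr _, _ => False

/-- The `n`-downlinked mutual dyad: the `n`-uplinked mutual dyad with all arcs reversed. -/
def downlinkArc (n : ℕ) (u v : Fin 2 ⊕ Fin n) : Prop := uplinkArc n v u

section Aux

variable {R V : Type} [CommRing R] [Fintype V] [DecidableEq V]

theorem pathBoundary_apply (p : ℕ) (f : (Fin (p+1) → V) → R) (w : Fin p → V) :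
    pathBoundary R V p f w =
      ∑ j : Fin (p + 1), (-1 : R) ^ (j : ℕ) * ∑ v : V, f (j.insertNth v w) := by
  show (∑ x : Fin (p + 1) → V,
    (∑ j : Fin (p + 1), (-1 : R) ^ (j : ℕ) *
      (if (fun i => x (j.succAbove i)) = w then 1 else 0)) * f x) = _
  simp_rw [Finset.sum_mul]
  rw [Finset.sum_comm]
  refine Finset.sum_congr rfl fun j _ => ?_
  · rw [Finset.sum_congr rfl (g := fun x => (-1:R)^(j:ℕ) * ((if (fun i => x (j.succAbove i)) = w then 1 else 0) * f x)) (fun x _ => by ring), ← Finset.mul_sum]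
    congr 1
    rw [Finset.sum_congr rfl (g := fun x => if (fun i => x (j.succAbove i)) = w then f x else 0) (fun x _ => by split <;> simp_all)]
    rw [Finset.sum_ite, Finset.sum_const_zero, add_zero]
    refine Finset.sum_nbij' (i := fun x => x j) (j := fun v => j.insertNth v w) ?_ ?_ ?_ ?_ ?_
    · intro a _; exact Finset.mem_univ _
    · intro v _
      simp only [Finset.mem_filter, Finset.mem_univ, true_and]
      funext i; exact Fin.insertNth_apply_succAbove (α := fun _ => V) j v w i
    · intro x hx
      simp only [Finset.mem_filter, Finset.mem_univ, true_and] at hx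
      rw [← hx]; exact Fin.insertNth_self_removeNth (α := fun _ => V) j x
    · intro v _; exact Fin.insertNth_apply_same (α := fun _ => V) j v w
    · intro x hx
      simp only [Finset.mem_filter, Finset.mem_univ, true_and] at hx
      rw [← hx]
      exact congrArg f (Fin.insertNth_self_removeNth (α := fun _ => V) j x).symm

end Aux
section Digraph

@[simp] lemma arc_inr_inl {n : ℕ} (i : Fin n) (c : Fin 2) : downlinkArc n (.inr i) (.inl c) := by
  simp [downlinkArc, uplinkArc]

@[simp] lemma arc_inr_inr {n : ℕ} (i j : Fin n) : ¬ downlinkArc n (.inr i) (.inr j) := by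
  simp [downlinkArc, uplinkArc]

@[simp] lemma arc_inl_inr {n : ℕ} (c : Fin 2) (j : Fin n) : ¬ downlinkArc n (.inl c) (.inr j) := by
  simp [downlinkArc, uplinkArc]

@[simp] lemma arc_inl_inl {n : ℕ} (c d : Fin 2) : downlinkArc n (.inl c) (.inl d) ↔ d ≠ c := by
  simp [downlinkArc, uplinkArc]

lemma isAllowed_single {V : Type} (A : V → V → Prop) (x : Fin 1 → V) : IsAllowed A x := by
  intro i h; omega

lemma isAllowed_zero {V : Type} (A : V → V → Prop) (x : Fin 0 → V) : IsAllowed A x := by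
  intro i h; omega

lemma isAllowed_pair {V : Type} (A : V → V → Prop) (u v : V) :
    IsAllowed A ![u, v] ↔ A u v := by
  constructor
  · intro h; have := h 0 (by omega); simpa using this
  · intro h i hi
    have : i = 0 := by omega
    subst this; simpa using h

lemma isAllowed_triple {V : Type} (A : V → V → Prop) (u v t : V) :
    IsAllowed A ![u, v, t] ↔ A u v ∧ A v t := by
  constructor
  · intro h
    refine ⟨?_, ?_⟩
    · have := h 0 (by omega); simpa using this
    · have := h 1 (by omega); simpa using this
  · rintro ⟨h1, h2⟩ i hi
    have : i = 0 ∨ i = 1 := by omega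
    rcases this with rfl | rfl
    · simpa using h1
    · simpa using h2

end Digraph

@[simp] lemma arc_to_inr {n : ℕ} (u : Fin 2 ⊕ Fin n) (j : Fin n) : ¬ downlinkArc n u (Sum.inr j) := by
  rcases u <;> simp [downlinkArc, uplinkArc]
section Double

lemma val_succAbove {p : ℕ} (j : Fin (p+1)) (k : Fin p) :
    ((j.succAbove k : Fin (p+1)) : ℕ) = if (k : ℕ) < (j : ℕ) then (k : ℕ) else (k : ℕ) + 1 := by
  rcases Nat.lt_or_ge (k : ℕ) (j : ℕ) with h | h
  · rw [if_pos h, Fin.succAbove, if_pos (by simpa [Fin.lt_def] using h)]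
    rfl
  · rw [if_neg (by omega), Fin.succAbove, if_neg (by simp only [Fin.lt_def, Fin.coe_castSucc]; omega)]
    rfl

lemma fin2_eq_add_one : ∀ {c d : Fin 2}, d ≠ c → d = c + 1 := by decide

variable {F : Type} [Field F] {n : ℕ}

lemma double_zero {p : ℕ} {ω : (Fin (p+1) → Fin 2 ⊕ Fin n) → F}
    (hω : ω ∈ invariantPaths F (Fin 2 ⊕ Fin n) (downlinkArc n) p)
    (w : Fin p → Fin 2 ⊕ Fin n) (k : ℕ) (hk : k + 1 < p) (c : Fin 2)
    (h1 : w ⟨k, by omega⟩ = .inl c) (h2 : w ⟨k+1, hk⟩ = .inl c) :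
    ω (Fin.insertNth ⟨k+1, by omega⟩ (.inl (c+1)) w) = 0 := by
  set j0 : Fin (p+1) := ⟨k+1, by omega⟩ with hj0
  have hw : ¬ IsAllowed (downlinkArc n) w := by
    intro hall
    have := hall k hk
    rw [h1, h2] at this
    simp at this
  have h0 : pathBoundary F (Fin 2 ⊕ Fin n) p ω w = 0 := hω.2 w hw
  rw [pathBoundary_apply] at h0
  have hterm : ∀ j : Fin (p+1), j ≠ j0 → ∀ v, ω (j.insertNth v w) = 0 := by
    intro j hj v
    apply hω.1
    intro hall
    have hjv : (j : ℕ) ≠ k + 1 := fun h => hj (Fin.ext h)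
    have hyk : Fin.insertNth (α := fun _ => (Fin 2 ⊕ Fin n)) j v w (j.succAbove ⟨k, by omega⟩) = Sum.inl c := by
      rw [Fin.insertNth_apply_succAbove (α := fun _ => (Fin 2 ⊕ Fin n))]; exact h1
    have hyk1 : Fin.insertNth (α := fun _ => (Fin 2 ⊕ Fin n)) j v w (j.succAbove ⟨k+1, hk⟩) = Sum.inl c := by
      rw [Fin.insertNth_apply_succAbove (α := fun _ => (Fin 2 ⊕ Fin n))]; exact h2
    have key : ((j.succAbove ⟨k+1, hk⟩ : Fin (p+1)) : ℕ)
        = ((j.succAbove ⟨k, by omega⟩ : Fin (p+1)) : ℕ) + 1 := by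
      rw [val_succAbove, val_succAbove]
      simp only
      split_ifs <;> omega
    have hb : ((j.succAbove ⟨k, by omega⟩ : Fin (p+1)) : ℕ) + 1 < p + 1 := by
      rw [← key]; exact (j.succAbove ⟨k+1, hk⟩).isLt
    have harc := hall ((j.succAbove ⟨k, by omega⟩ : Fin (p+1)) : ℕ) hb
    have q1 : Fin.insertNth (α := fun _ => (Fin 2 ⊕ Fin n)) j v w ⟨((j.succAbove ⟨k, by omega⟩ : Fin (p+1)) : ℕ), by omega⟩
        = Sum.inl c := by
      have e1 : (⟨((j.succAbove ⟨k, by omega⟩ : Fin (p+1)) : ℕ), by omega⟩ : Fin (p+1))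
          = j.succAbove ⟨k, by omega⟩ := Fin.ext rfl
      rw [e1]; exact hyk
    have q2 : Fin.insertNth (α := fun _ => (Fin 2 ⊕ Fin n)) j v w ⟨((j.succAbove ⟨k, by omega⟩ : Fin (p+1)) : ℕ) + 1, hb⟩
        = Sum.inl c := by
      have e2 : (⟨((j.succAbove ⟨k, by omega⟩ : Fin (p+1)) : ℕ) + 1, hb⟩ : Fin (p+1))
          = j.succAbove ⟨k+1, hk⟩ := Fin.ext key.symm
      rw [e2]; exact hyk1
    rw [q1, q2] at harc
    simp at harc
  rw [Finset.sum_eq_single j0 (fun j _ hj => by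
      rw [Finset.sum_eq_zero (fun v _ => hterm j hj v), mul_zero])
    (fun h => absurd (Finset.mem_univ _) h)] at h0
  have hsum : (∑ v : Fin 2 ⊕ Fin n, ω (j0.insertNth v w)) = 0 := by
    have hne : ((-1 : F) ^ (j0 : ℕ)) ≠ 0 := pow_ne_zero _ (by norm_num)
    exact (mul_eq_zero.mp h0).resolve_left hne
  have hv : ∀ v : Fin 2 ⊕ Fin n, v ≠ Sum.inl (c+1) → ω (j0.insertNth v w) = 0 := by
    intro v hvne
    apply hω.1
    intro hall
    have harc := hall k (by omega)
    have key1 : Fin.insertNth (α := fun _ => (Fin 2 ⊕ Fin n)) j0 v w ⟨k, by omega⟩ = Sum.inl c := by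
      have e1 : (⟨k, by omega⟩ : Fin (p+1)) = j0.succAbove ⟨k, by omega⟩ := by
        apply Fin.ext
        rw [val_succAbove]
        simp [hj0]
      rw [e1, Fin.insertNth_apply_succAbove (α := fun _ => (Fin 2 ⊕ Fin n))]
      exact h1
    have key2 : Fin.insertNth (α := fun _ => (Fin 2 ⊕ Fin n)) j0 v w ⟨k+1, by omega⟩ = v := by
      have e2 : (⟨k+1, by omega⟩ : Fin (p+1)) = j0 := rfl
      rw [e2, Fin.insertNth_apply_same]
    rw [key1, key2] at harc
    rcases v with d | i
    · simp only [arc_inl_inl] at harc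
      exact hvne (congrArg Sum.inl (fin2_eq_add_one harc))
    · exact arc_inl_inr _ _ harc
  rw [Finset.sum_eq_single (Sum.inl (c+1)) (fun v _ hvne => hv v hvne)
    (fun h => absurd (Finset.mem_univ _) h)] at hsum
  exact hsum

end Double
section InsSmall

variable {V : Type}

lemma ins3_0 (v : V) (w : Fin 2 → V) : Fin.insertNth (α := fun _ => V) 0 v w = ![v, w 0, w 1] := by
  funext i
  fin_cases i <;> simp [Fin.insertNth, Fin.succAboveCases, Fin.lt_def, Fin.ext_iff, Fin.castPred, Fin.castLT, Fin.pred, Fin.subNat]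

lemma ins3_1 (v : V) (w : Fin 2 → V) : Fin.insertNth (α := fun _ => V) 1 v w = ![w 0, v, w 1] := by
  funext i
  fin_cases i <;> simp [Fin.insertNth, Fin.succAboveCases, Fin.lt_def, Fin.ext_iff, Fin.castPred, Fin.castLT, Fin.pred, Fin.subNat]

lemma ins3_2 (v : V) (w : Fin 2 → V) : Fin.insertNth (α := fun _ => V) 2 v w = ![w 0, w 1, v] := by
  funext i
  fin_cases i <;> simp [Fin.insertNth, Fin.succAboveCases, Fin.lt_def, Fin.ext_iff, Fin.castPred, Fin.castLT, Fin.pred, Fin.subNat]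

lemma ins2_0 (v : V) (w : Fin 1 → V) : Fin.insertNth (α := fun _ => V) 0 v w = ![v, w 0] := by
  funext i
  fin_cases i <;> simp [Fin.insertNth, Fin.succAboveCases, Fin.lt_def, Fin.ext_iff, Fin.castPred, Fin.castLT, Fin.pred, Fin.subNat]

lemma ins2_1 (v : V) (w : Fin 1 → V) : Fin.insertNth (α := fun _ => V) 1 v w = ![w 0, v] := by
  funext i
  fin_cases i <;> simp [Fin.insertNth, Fin.succAboveCases, Fin.lt_def, Fin.ext_iff, Fin.castPred, Fin.castLT, Fin.pred, Fin.subNat]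

lemma vec2_eta (w : Fin 2 → V) : w = ![w 0, w 1] := by
  funext i; fin_cases i <;> rfl

lemma vec3_eta {V : Type} (w : Fin 3 → V) : w = ![w 0, w 1, w 2] := by
  funext i; fin_cases i <;> rfl

lemma vec1_eta (w : Fin 1 → V) : w = ![w 0] := by
  funext i; fin_cases i <;> rfl

end InsSmall

section HighVanish

variable {F : Type} [Field F] {n : ℕ}

theorem invariantPaths_high_eq_bot (p : ℕ) (hp : 3 ≤ p) :
    invariantPaths F (Fin 2 ⊕ Fin n) (downlinkArc n) p = ⊥ := by
  rw [Submodule.eq_bot_iff]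
  intro ω hω
  funext x
  show ω x = (0 : F)
  by_cases hall : IsAllowed (downlinkArc n) x
  · have h0 := hall 0 (by omega)
    have h1 := hall 1 (by omega)
    have h2 := hall 2 (by omega)
    rcases e1 : x ⟨1, by omega⟩ with c1 | i1
    swap
    · rw [e1] at h0; exact absurd h0 (arc_to_inr _ _)
    rcases e2 : x ⟨2, by omega⟩ with c2 | i2
    swap
    · rw [e2] at h1; exact absurd h1 (arc_to_inr _ _)
    rcases e3 : x ⟨3, by omega⟩ with c3 | i3
    swap
    · rw [e3] at h2; exact absurd h2 (arc_to_inr _ _)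
    rw [e1, e2] at h1
    rw [e2, e3] at h2
    rw [arc_inl_inl] at h1 h2
    have hc3 : c3 = c1 := by
      rw [fin2_eq_add_one h2]
      exact (fin2_eq_add_one (Ne.symm h1)).symm
    set w : Fin p → Fin 2 ⊕ Fin n :=
      fun m => x ((⟨2, by omega⟩ : Fin (p+1)).succAbove m) with hwdef
    have hw1 : w ⟨1, by omega⟩ = Sum.inl c1 := by
      have : ((⟨2, by omega⟩ : Fin (p+1)).succAbove ⟨1, by omega⟩) = ⟨1, by omega⟩ := by
        apply Fin.ext; rw [val_succAbove]; norm_num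
      rw [hwdef]; simp only [this]; exact e1
    have hw2 : w ⟨2, by omega⟩ = Sum.inl c1 := by
      have : ((⟨2, by omega⟩ : Fin (p+1)).succAbove ⟨2, by omega⟩) = ⟨3, by omega⟩ := by
        apply Fin.ext; rw [val_succAbove]; norm_num
      rw [hwdef]; simp only [this, e3, hc3]
    have hdz := double_zero hω w 1 (by omega) c1 hw1 hw2
    have hx : Fin.insertNth (α := fun _ => (Fin 2 ⊕ Fin n)) ⟨2, by omega⟩ (Sum.inl (c1+1)) w = x := by
      have hc2 : Sum.inl (β := Fin n) (c1 + 1) = x ⟨2, by omega⟩ := by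
        rw [e2]
        exact congrArg Sum.inl (fin2_eq_add_one h1).symm
      rw [hc2]
      exact Fin.insertNth_self_removeNth (α := fun _ => (Fin 2 ⊕ Fin n)) _ x
    rw [hx] at hdz
    exact hdz
  · exact hω.1 x hall

end HighVanish
section DeltaBdry

variable {R V : Type} [CommRing R] [Fintype V] [DecidableEq V]

lemma pathBoundary_delta (p : ℕ) (x : Fin (p+1) → V) :
    pathBoundary R V p (fun y => if y = x then 1 else 0) =
      fun w => ∑ j : Fin (p+1), (-1 : R) ^ (j : ℕ) *
        (if (fun i => x (j.succAbove i)) = w then 1 else 0) := by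
  funext w
  show (∑ y : Fin (p + 1) → V,
    (∑ j : Fin (p + 1), (-1 : R) ^ (j : ℕ) *
      (if (fun i => y (j.succAbove i)) = w then 1 else 0)) * (if y = x then 1 else 0)) = _
  rw [Finset.sum_eq_single x (fun y _ hy => by rw [if_neg hy, mul_zero])
    (fun h => absurd (Finset.mem_univ _) h), if_pos rfl, mul_one]

lemma rm3_0 (u v t : V) : (fun i => ![u,v,t] ((0 : Fin 3).succAbove i)) = ![v, t] := by
  funext i; fin_cases i <;> rfl

lemma rm3_1 (u v t : V) : (fun i => ![u,v,t] ((1 : Fin 3).succAbove i)) = ![u, t] := by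
  funext i; fin_cases i <;> rfl

lemma rm3_2 (u v t : V) : (fun i => ![u,v,t] ((2 : Fin 3).succAbove i)) = ![u, v] := by
  funext i; fin_cases i <;> rfl

lemma rm2_0 (u v : V) : (fun i => ![u,v] ((0 : Fin 2).succAbove i)) = ![v] := by
  funext i; fin_cases i <;> rfl

lemma rm2_1 (u v : V) : (fun i => ![u,v] ((1 : Fin 2).succAbove i)) = ![u] := by
  funext i; fin_cases i <;> rfl

lemma bdry_delta3 (u v t : V) :
    pathBoundary R V 2 (fun y => if y = ![u,v,t] then 1 else 0) =
      fun w => (if ![v,t] = w then 1 else 0) - (if ![u,t] = w then 1 else 0)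
        + (if ![u,v] = w then 1 else 0) := by
  rw [pathBoundary_delta]
  funext w
  rw [Fin.sum_univ_three]
  rw [rm3_0, rm3_1, rm3_2]
  norm_num
  split <;> split <;> ring

lemma bdry_delta2 (u v : V) :
    pathBoundary R V 1 (fun y => if y = ![u,v] then 1 else 0) =
      fun w => (if ![v] = w then 1 else 0) - (if ![u] = w then 1 else 0) := by
  rw [pathBoundary_delta]
  funext w
  rw [Fin.sum_univ_two]
  rw [rm2_0, rm2_1]
  norm_num
  split <;> split <;> ring

end DeltaBdry
section PhiDef

def Pp (n : ℕ) (i : Fin n) : Fin 3 → Fin 2 ⊕ Fin n := ![Sum.inr i, Sum.inl 0, Sum.inl 1]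
def Qp (n : ℕ) (i : Fin n) : Fin 3 → Fin 2 ⊕ Fin n := ![Sum.inr i, Sum.inl 1, Sum.inl 0]

variable {n : ℕ}

lemma allowed_Pp (i : Fin n) : IsAllowed (downlinkArc n) (Pp n i) := by
  rw [Pp, isAllowed_triple]
  refine ⟨arc_inr_inl _ _, ?_⟩
  rw [arc_inl_inl]
  decide

lemma allowed_Qp (i : Fin n) : IsAllowed (downlinkArc n) (Qp n i) := by
  rw [Qp, isAllowed_triple]
  refine ⟨arc_inr_inl _ _, ?_⟩
  rw [arc_inl_inl]
  decide

lemma Pp_inj {i j : Fin n} (h : Pp n i = Pp n j) : i = j := by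
  have := congrFun h 0
  simpa [Pp] using this

lemma Qp_inj {i j : Fin n} (h : Qp n i = Qp n j) : i = j := by
  have := congrFun h 0
  simpa [Qp] using this

lemma Pp_ne_Qp (i j : Fin n) : Pp n i ≠ Qp n j := by
  intro h
  have := congrFun h 1
  simp [Pp, Qp] at this

variable (F : Type) [Field F]

noncomputable def Phi (n : ℕ) (α β : Fin n → F) : (Fin 3 → Fin 2 ⊕ Fin n) → F :=
  fun x => ∑ i, (α i * (if x = Pp n i then 1 else 0) + β i * (if x = Qp n i then 1 else 0))

variable {F}

lemma Phi_apply_Pp (α β : Fin n → F) (i : Fin n) : Phi F n α β (Pp n i) = α i := by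
  rw [Phi]
  rw [Finset.sum_eq_single i (fun j _ hj => ?_) (fun h => absurd (Finset.mem_univ _) h)]
  · rw [if_pos rfl, if_neg (Pp_ne_Qp i i), mul_one, mul_zero, add_zero]
  · rw [if_neg (fun h => hj (Pp_inj h).symm), if_neg (Pp_ne_Qp i j), mul_zero, mul_zero, add_zero]

lemma Phi_apply_Qp (α β : Fin n → F) (i : Fin n) : Phi F n α β (Qp n i) = β i := by
  rw [Phi]
  rw [Finset.sum_eq_single i (fun j _ hj => ?_) (fun h => absurd (Finset.mem_univ _) h)]
  · rw [if_pos rfl, if_neg (Ne.symm (Pp_ne_Qp i i)), mul_one, mul_zero, zero_add]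
  · rw [if_neg (Ne.symm (Pp_ne_Qp j i)), if_neg (fun h => hj (Qp_inj h).symm), mul_zero, mul_zero, add_zero]

lemma Phi_apply_ne (α β : Fin n → F) (x : Fin 3 → Fin 2 ⊕ Fin n)
    (hx : ∀ i, x ≠ Pp n i ∧ x ≠ Qp n i) : Phi F n α β x = 0 := by
  rw [Phi]
  exact Finset.sum_eq_zero fun i _ => by
    rw [if_neg (hx i).1, if_neg (hx i).2, mul_zero, mul_zero, add_zero]

lemma Phi_mem_allowed (α β : Fin n → F) :
    Phi F n α β ∈ allowedSubmodule F (Fin 2 ⊕ Fin n) (downlinkArc n) 3 := by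
  intro x hx
  refine Phi_apply_ne α β x fun i => ⟨?_, ?_⟩
  · rintro rfl; exact hx (allowed_Pp i)
  · rintro rfl; exact hx (allowed_Qp i)

lemma Phi_eq_sum_delta (α β : Fin n → F) :
    Phi F n α β = ∑ i, (α i • (fun y => if y = Pp n i then (1:F) else 0)
      + β i • (fun y => if y = Qp n i then (1:F) else 0)) := by
  funext x
  rw [Phi, Finset.sum_apply]
  refine Finset.sum_congr rfl fun i _ => ?_
  simp [smul_eq_mul]

lemma bdry_Phi (α β : Fin n → F) :
    pathBoundary F (Fin 2 ⊕ Fin n) 2 (Phi F n α β) = fun w =>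
      (∑ i, α i) * (if ![Sum.inl 0, Sum.inl 1] = w then 1 else 0)
      + (∑ i, β i) * (if ![Sum.inl 1, Sum.inl 0] = w then 1 else 0)
      + ∑ i, ((α i - β i) * (if ![Sum.inr i, Sum.inl 0] = w then 1 else 0)
            + (β i - α i) * (if ![Sum.inr i, Sum.inl 1] = w then 1 else 0)) := by
  rw [Phi_eq_sum_delta, map_sum]
  funext w
  rw [Finset.sum_apply]
  have hterm : ∀ i : Fin n, (pathBoundary F (Fin 2 ⊕ Fin n) 2
      (α i • (fun y => if y = Pp n i then (1:F) else 0)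
        + β i • (fun y => if y = Qp n i then (1:F) else 0))) w
      = α i * ((if ![Sum.inl 0, Sum.inl 1] = w then 1 else 0)
          - (if ![Sum.inr i, Sum.inl 1] = w then 1 else 0)
          + (if ![Sum.inr i, Sum.inl 0] = w then 1 else 0))
        + β i * ((if ![Sum.inl 1, Sum.inl 0] = w then 1 else 0)
          - (if ![Sum.inr i, Sum.inl 0] = w then 1 else 0)
          + (if ![Sum.inr i, Sum.inl 1] = w then 1 else 0)) := by
    intro i
    rw [map_add, map_smul, map_smul]
    show α i * _ + β i * _ = _
    rw [Pp, Qp, bdry_delta3, bdry_delta3]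
  rw [Finset.sum_congr rfl (fun i _ => hterm i), Finset.sum_mul, Finset.sum_mul,
    ← Finset.sum_add_distrib, ← Finset.sum_add_distrib]
  exact Finset.sum_congr rfl fun i _ => by ring

end PhiDef
section Z2

lemma fin2_cases : ∀ c : Fin 2, c = 0 ∨ c = 1 := by decide

variable {F : Type} [Field F] {n : ℕ}

lemma pathCycles_succ (R V : Type) [CommRing R] [Fintype V] [DecidableEq V]
    (A : V → V → Prop) (p : ℕ) :
    pathCycles R V A (p+1) = invariantPaths R V A (p+1) ⊓ LinearMap.ker (pathBoundary R V (p+1)) := rfl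

noncomputable def PhiLin (F : Type) [Field F] (n : ℕ) :
    (Fin n → F) →ₗ[F] ((Fin 3 → Fin 2 ⊕ Fin n) → F) where
  toFun c := Phi F n c c
  map_add' c d := by
    funext x
    simp only [Phi, Pi.add_apply, add_mul, ← Finset.sum_add_distrib]
    exact Finset.sum_congr rfl fun i _ => by ring
  map_smul' r c := by
    funext x
    simp only [Phi, Pi.smul_apply, smul_eq_mul, RingHom.id_apply, Finset.mul_sum]
    exact Finset.sum_congr rfl fun i _ => by ring

noncomputable def sumLin (F : Type) [Field F] (n : ℕ) : (Fin n → F) →ₗ[F] F where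
  toFun c := ∑ i, c i
  map_add' c d := by simp [Finset.sum_add_distrib]
  map_smul' r c := by simp [Finset.mul_sum]

lemma Phi_cc_mem (c : Fin n → F) (hc : ∑ i, c i = 0) :
    Phi F n c c ∈ pathCycles F (Fin 2 ⊕ Fin n) (downlinkArc n) 2 := by
  have hz : pathBoundary F (Fin 2 ⊕ Fin n) 2 (Phi F n c c) = 0 := by
    rw [bdry_Phi]
    funext w
    rw [hc]
    simp
  refine ⟨⟨Phi_mem_allowed c c, ?_⟩, ?_⟩
  · have hmem : Phi F n c c ∈ Submodule.comap (pathBoundary F (Fin 2 ⊕ Fin n) 2)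
        (allowedSubmodule F (Fin 2 ⊕ Fin n) (downlinkArc n) 2) :=
      Submodule.mem_comap.mpr (by rw [hz]; exact Submodule.zero_mem _)
    exact hmem
  · exact LinearMap.mem_ker.mpr hz

lemma omega_aba {ω : (Fin 3 → Fin 2 ⊕ Fin n) → F}
    (hω : ω ∈ invariantPaths F (Fin 2 ⊕ Fin n) (downlinkArc n) 2) (c : Fin 2) :
    ω ![Sum.inl c, Sum.inl (c+1), Sum.inl c] = 0 := by
  have h := double_zero hω ![Sum.inl c, Sum.inl c] 0 (by omega) c (by simp) (by simp)
  have e : (⟨0+1, by omega⟩ : Fin 3) = 1 := rfl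
  rw [e, ins3_1] at h
  simpa using h

lemma not_allowed_of_arc01 {q : ℕ} {x : Fin (q+2) → Fin 2 ⊕ Fin n}
    (h : ¬ downlinkArc n (x ⟨0, by omega⟩) (x ⟨1, by omega⟩)) :
    ¬ IsAllowed (downlinkArc n) x := fun hall => h (hall 0 (by omega))

lemma bdry_zero_apply {ω : (Fin 3 → Fin 2 ⊕ Fin n) → F}
    (hz : pathBoundary F (Fin 2 ⊕ Fin n) 2 ω = 0) (w : Fin 2 → Fin 2 ⊕ Fin n) :
    (∑ v, ω ![v, w 0, w 1]) - (∑ v, ω ![w 0, v, w 1]) + (∑ v, ω ![w 0, w 1, v]) = 0 := by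
  have h := congrFun hz w
  rw [Pi.zero_apply, pathBoundary_apply, Fin.sum_univ_three] at h
  have h2 : ((2 : Fin 3) : ℕ) = 2 := rfl
  rw [h2] at h
  simp only [ins3_0, ins3_1, ins3_2, Fin.val_zero, Fin.val_one, pow_zero, pow_one,
    one_mul, neg_one_mul, neg_one_sq] at h
  linear_combination h

lemma omega_QP {ω : (Fin 3 → Fin 2 ⊕ Fin n) → F}
    (hω : ω ∈ pathCycles F (Fin 2 ⊕ Fin n) (downlinkArc n) 2) (i : Fin n) :
    ω (Qp n i) = ω (Pp n i) := by
  have hsupp := hω.1.1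
  have h := bdry_zero_apply (LinearMap.mem_ker.mp hω.2) ![Sum.inr i, Sum.inl 0]
  simp only [Matrix.cons_val_zero, Matrix.cons_val_one, Matrix.head_cons] at h
  have S0 : (∑ v, ω ![v, Sum.inr i, Sum.inl 0]) = 0 := by
    refine Finset.sum_eq_zero fun v _ => hsupp _ ?_
    rw [isAllowed_triple]
    rintro ⟨h1, -⟩
    exact arc_to_inr _ _ h1
  have S1 : (∑ v, ω ![Sum.inr i, v, Sum.inl 0]) = ω (Qp n i) := by
    rw [Finset.sum_eq_single (Sum.inl 1) (fun v _ hv => hsupp _ ?_)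
      (fun h => absurd (Finset.mem_univ _) h)]
    · rfl
    · rw [isAllowed_triple]
      rintro ⟨h1, h2⟩
      rcases v with d | j
      · rw [arc_inl_inl] at h2
        rcases fin2_cases d with rfl | rfl
        · exact h2 rfl
        · exact hv rfl
      · exact arc_inr_inr _ _ h1
  have S2 : (∑ v, ω ![Sum.inr i, Sum.inl 0, v]) = ω (Pp n i) := by
    rw [Finset.sum_eq_single (Sum.inl 1) (fun v _ hv => hsupp _ ?_)
      (fun h => absurd (Finset.mem_univ _) h)]
    · rfl
    · rw [isAllowed_triple]
      rintro ⟨h1, h2⟩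
      rcases v with d | j
      · rw [arc_inl_inl] at h2
        rcases fin2_cases d with rfl | rfl
        · exact h2 rfl
        · exact hv rfl
      · exact arc_inl_inr _ _ h2
  rw [S0, S1, S2] at h
  linear_combination -h

lemma omega_sum {ω : (Fin 3 → Fin 2 ⊕ Fin n) → F}
    (hω : ω ∈ pathCycles F (Fin 2 ⊕ Fin n) (downlinkArc n) 2) :
    (∑ i, ω (Pp n i)) = 0 := by
  have hsupp := hω.1.1
  have h := bdry_zero_apply (LinearMap.mem_ker.mp hω.2) ![Sum.inl 0, Sum.inl 1]
  simp only [Matrix.cons_val_zero, Matrix.cons_val_one, Matrix.head_cons] at h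
  have T0 : (∑ v, ω ![v, Sum.inl 0, Sum.inl 1]) = ∑ i, ω (Pp n i) := by
    rw [Fintype.sum_sum_type, Fin.sum_univ_two]
    have e0 : ω ![Sum.inl 0, Sum.inl 0, Sum.inl 1] = 0 := by
      refine hsupp _ ?_
      rw [isAllowed_triple]
      rintro ⟨h1, -⟩
      rw [arc_inl_inl] at h1
      exact h1 rfl
    have e1 : ω ![Sum.inl 1, Sum.inl 0, Sum.inl 1] = 0 := by
      have := omega_aba hω.1 1
      simpa using this
    rw [e0, e1]
    simp [Pp]
  have T1 : (∑ v, ω ![Sum.inl 0, v, Sum.inl 1]) = 0 := by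
    refine Finset.sum_eq_zero fun v _ => hsupp _ ?_
    rw [isAllowed_triple]
    rintro ⟨h1, h2⟩
    rcases v with d | j
    · rw [arc_inl_inl] at h1 h2
      rcases fin2_cases d with rfl | rfl
      · exact h1 rfl
      · exact h2 rfl
    · exact arc_inl_inr _ _ h1
  have T2 : (∑ v, ω ![Sum.inl 0, Sum.inl 1, v]) = 0 := by
    rw [Finset.sum_eq_single (Sum.inl 0) (fun v _ hv => hsupp _ ?_)
      (fun h => absurd (Finset.mem_univ _) h)]
    · have := omega_aba hω.1 0
      simpa using this
    · rw [isAllowed_triple]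
      rintro ⟨-, h2⟩
      rcases v with d | j
      · rw [arc_inl_inl] at h2
        rcases fin2_cases d with rfl | rfl
        · exact hv rfl
        · exact h2 rfl
      · exact arc_inl_inr _ _ h2
  rw [T0, T1, T2] at h
  linear_combination h

lemma omega_repr {ω : (Fin 3 → Fin 2 ⊕ Fin n) → F}
    (hω : ω ∈ pathCycles F (Fin 2 ⊕ Fin n) (downlinkArc n) 2) :
    Phi F n (fun i => ω (Pp n i)) (fun i => ω (Pp n i)) = ω := by
  have hsupp := hω.1.1
  funext x
  by_cases hall : IsAllowed (downlinkArc n) x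
  swap
  · rw [hsupp x hall]
    refine Phi_apply_ne _ _ x fun i => ⟨?_, ?_⟩
    · rintro rfl; exact hall (allowed_Pp i)
    · rintro rfl; exact hall (allowed_Qp i)
  · have h01 : downlinkArc n (x 0) (x 1) := hall 0 (by omega)
    have h12 : downlinkArc n (x 1) (x 2) := hall 1 (by omega)
    rcases ex1 : x 1 with c1 | i1
    swap
    · rw [ex1] at h01; exact absurd h01 (arc_to_inr _ _)
    rcases ex2 : x 2 with c2 | i2
    swap
    · rw [ex2] at h12; exact absurd h12 (arc_to_inr _ _)
    rw [ex1, ex2, arc_inl_inl] at h12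
    rcases ex0 : x 0 with c0 | i0
    · rw [ex0, ex1, arc_inl_inl] at h01
      have hx : x = ![Sum.inl c0, Sum.inl c1, Sum.inl c2] := by
        funext ii
        fin_cases ii
        · exact ex0
        · exact ex1
        · exact ex2
      have hPQ : ∀ i : Fin n, x ≠ Pp n i ∧ x ≠ Qp n i := by
        intro i
        refine ⟨fun hcon => ?_, fun hcon => ?_⟩
        · have h' := congrFun hcon 0
          rw [ex0] at h'
          simp [Pp] at h'
        · have h' := congrFun hcon 0
          rw [ex0] at h'
          simp [Qp] at h'
      rw [Phi_apply_ne _ _ x hPQ, hx]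
      rcases fin2_cases c0 with rfl | rfl <;> rcases fin2_cases c1 with rfl | rfl <;>
        rcases fin2_cases c2 with rfl | rfl <;>
        first
        | exact absurd rfl h01
        | exact absurd rfl h12
        | (have hz := omega_aba hω.1 0; simpa using hz.symm)
        | (have hz := omega_aba hω.1 1; simpa using hz.symm)
    · rcases fin2_cases c1 with rfl | rfl <;> rcases fin2_cases c2 with rfl | rfl
      · exact absurd rfl h12
      · have hx : x = Pp n i0 := by
          funext ii
          fin_cases ii
          · exact ex0
          · exact ex1
          · exact ex2
        rw [hx, Phi_apply_Pp]
      · have hx : x = Qp n i0 := by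
          funext ii
          fin_cases ii
          · exact ex0
          · exact ex1
          · exact ex2
        rw [hx, Phi_apply_Qp]
        exact (omega_QP hω i0).symm
      · exact absurd rfl h12

theorem pathCycles2_eq :
    pathCycles F (Fin 2 ⊕ Fin n) (downlinkArc n) 2
      = Submodule.map (PhiLin F n) (LinearMap.ker (sumLin F n)) := by
  ext ω
  constructor
  · intro hω
    exact ⟨fun i => ω (Pp n i), LinearMap.mem_ker.mpr (omega_sum hω), omega_repr hω⟩
  · rintro ⟨c, hc, rfl⟩
    exact Phi_cc_mem c (by simpa [sumLin] using hc)

lemma PhiLin_inj : Function.Injective (PhiLin F n) := by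
  intro c d h
  funext i
  have h' := congrFun h (Pp n i)
  have hc : PhiLin F n c (Pp n i) = c i := Phi_apply_Pp c c i
  have hd : PhiLin F n d (Pp n i) = d i := Phi_apply_Pp d d i
  rw [hc, hd] at h'
  exact h'

lemma sumLin_surj (hn : 1 ≤ n) : Function.Surjective (sumLin F n) := by
  intro y
  refine ⟨Pi.single ⟨0, hn⟩ y, ?_⟩
  show (∑ i, Pi.single (⟨0, hn⟩ : Fin n) y i) = y
  simp [Pi.single_apply]

lemma finrank_ker_sumLin (hn : 1 ≤ n) :
    Module.finrank F (LinearMap.ker (sumLin F n)) = n - 1 := by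
  have h := LinearMap.finrank_range_add_finrank_ker (sumLin F n)
  rw [LinearMap.range_eq_top.mpr (sumLin_surj hn), finrank_top, Module.finrank_self,
    Module.finrank_fin_fun] at h
  omega

theorem finrank_Z2 (hn : 1 ≤ n) :
    Module.finrank F ↥(pathCycles F (Fin 2 ⊕ Fin n) (downlinkArc n) 2) = n - 1 := by
  rw [pathCycles2_eq]
  rw [← LinearEquiv.finrank_eq
    (Submodule.equivMapOfInjective (PhiLin F n) PhiLin_inj (LinearMap.ker (sumLin F n)))]
  exact finrank_ker_sumLin hn

theorem betti_two (hn : 1 ≤ n) : betti F (Fin 2 ⊕ Fin n) (downlinkArc n) 2 = n - 1 := by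
  have hB : (pathBoundaries F (Fin 2 ⊕ Fin n) (downlinkArc n) 2).comap
      (pathCycles F (Fin 2 ⊕ Fin n) (downlinkArc n) 2).subtype = ⊥ := by
    rw [pathBoundaries, invariantPaths_high_eq_bot 3 (le_refl 3), Submodule.map_bot,
      Submodule.comap_bot, Submodule.ker_subtype]
  rw [betti, LinearEquiv.finrank_eq (Submodule.quotEquivOfEqBot _ hB)]
  exact finrank_Z2 hn

end Z2
section High

variable {F : Type} [Field F] {n : ℕ}

theorem betti_high (p : ℕ) (hp : 3 ≤ p) :
    betti F (Fin 2 ⊕ Fin n) (downlinkArc n) p = 0 := by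
  obtain ⟨q, rfl⟩ : ∃ q, p = q + 1 := ⟨p - 1, by omega⟩
  have hcyc : pathCycles F (Fin 2 ⊕ Fin n) (downlinkArc n) (q+1) = ⊥ := by
    rw [pathCycles_succ, invariantPaths_high_eq_bot (q+1) hp, bot_inf_eq]
  haveI hss : Subsingleton ↥(pathCycles F (Fin 2 ⊕ Fin n) (downlinkArc n) (q+1)) := by
    rw [hcyc]; infer_instance
  haveI : Subsingleton (pathHomology F (Fin 2 ⊕ Fin n) (downlinkArc n) (q+1)) :=
    (Submodule.mkQ_surjective _).subsingleton
  exact Module.finrank_zero_of_subsingleton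

end High
section H1

variable {F : Type} [Field F] {n : ℕ}

lemma pair_eq_iff {V : Type} (u v u' v' : V) : (![u, v] = ![u', v']) ↔ (u = u' ∧ v = v') := by
  constructor
  · intro h; exact ⟨congrFun h 0, congrFun h 1⟩
  · rintro ⟨rfl, rfl⟩; rfl

lemma bdry1_apply {ω : (Fin 2 → Fin 2 ⊕ Fin n) → F}
    (hz : pathBoundary F (Fin 2 ⊕ Fin n) 1 ω = 0) (w : Fin 1 → Fin 2 ⊕ Fin n) :
    (∑ v, ω ![v, w 0]) - (∑ v, ω ![w 0, v]) = 0 := by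
  have h := congrFun hz w
  rw [Pi.zero_apply, pathBoundary_apply, Fin.sum_univ_two] at h
  simp only [ins2_0, ins2_1, Fin.val_zero, Fin.val_one, pow_zero, pow_one,
    one_mul, neg_one_mul] at h
  linear_combination h

lemma Z1_le_B1 (hn : 1 ≤ n) :
    pathCycles F (Fin 2 ⊕ Fin n) (downlinkArc n) 1
      ≤ pathBoundaries F (Fin 2 ⊕ Fin n) (downlinkArc n) 1 := by
  intro ω hω
  have hsupp : ∀ x, ¬ IsAllowed (downlinkArc n) x → ω x = 0 := hω.1.1
  have hz : pathBoundary F (Fin 2 ⊕ Fin n) 1 ω = 0 := hω.2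
  -- relation r1 : ω ![inr i, inl 0] + ω ![inr i, inl 1] = 0
  have r1 : ∀ i : Fin n, ω ![Sum.inr i, Sum.inl 0] + ω ![Sum.inr i, Sum.inl 1] = 0 := by
    intro i
    have h := bdry1_apply hz ![Sum.inr i]
    simp only [Matrix.cons_val_zero] at h
    have A0 : (∑ v, ω ![v, Sum.inr i]) = 0 :=
      Finset.sum_eq_zero fun v _ => hsupp _ (by
        rw [isAllowed_pair]; exact arc_to_inr _ _)
    have A1 : (∑ v, ω ![Sum.inr i, v])
        = ω ![Sum.inr i, Sum.inl 0] + ω ![Sum.inr i, Sum.inl 1] := by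
      rw [Fintype.sum_sum_type, Fin.sum_univ_two]
      have : (∑ j : Fin n, ω ![Sum.inr i, Sum.inr j]) = 0 :=
        Finset.sum_eq_zero fun j _ => hsupp _ (by
          rw [isAllowed_pair]; exact arc_inr_inr _ _)
      rw [this, add_zero]
    rw [A0, A1] at h
    linear_combination -h
  -- relation r2 : ω ![inl 1, inl 0] + ∑ i, ω ![inr i, inl 0] - ω ![inl 0, inl 1] = 0
  have r2 : ω ![Sum.inl 1, Sum.inl 0] + (∑ i, ω ![Sum.inr i, Sum.inl 0])
      - ω ![Sum.inl 0, Sum.inl 1] = 0 := by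
    have h := bdry1_apply hz ![Sum.inl 0]
    simp only [Matrix.cons_val_zero] at h
    have A0 : (∑ v, ω ![v, Sum.inl 0])
        = ω ![Sum.inl 1, Sum.inl 0] + ∑ i, ω ![Sum.inr i, Sum.inl 0] := by
      rw [Fintype.sum_sum_type, Fin.sum_univ_two]
      have e0 : ω ![Sum.inl 0, Sum.inl 0] = 0 := hsupp _ (by
        rw [isAllowed_pair, arc_inl_inl]; simp)
      rw [e0, zero_add]
    have A1 : (∑ v, ω ![Sum.inl 0, v]) = ω ![Sum.inl 0, Sum.inl 1] := by
      rw [Fintype.sum_sum_type, Fin.sum_univ_two]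
      have e0 : ω ![Sum.inl 0, Sum.inl 0] = 0 := hsupp _ (by
        rw [isAllowed_pair, arc_inl_inl]; simp)
      have e1 : (∑ j : Fin n, ω ![Sum.inl 0, Sum.inr j]) = 0 :=
        Finset.sum_eq_zero fun j _ => hsupp _ (by
          rw [isAllowed_pair]; exact arc_inl_inr _ _)
      rw [e0, e1, zero_add, add_zero]
    rw [A0, A1] at h
    linear_combination h
  -- the preimage
  set i0 : Fin n := ⟨0, hn⟩ with hi0
  set t : F := ω ![Sum.inl 0, Sum.inl 1] - ∑ i, ω ![Sum.inr i, Sum.inl 0] with ht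
  set α : Fin n → F := fun i => ω ![Sum.inr i, Sum.inl 0] + (if i = i0 then t else 0) with hα
  set β : Fin n → F := fun i => (if i = i0 then t else 0) with hβ
  have hsumα : (∑ i, α i) = ω ![Sum.inl 0, Sum.inl 1] := by
    rw [hα, Finset.sum_add_distrib, Finset.sum_ite_eq' Finset.univ i0 (fun _ => t)]
    simp [ht]
  have hsumβ : (∑ i, β i) = ω ![Sum.inl 1, Sum.inl 0] := by
    rw [hβ, Finset.sum_ite_eq' Finset.univ i0 (fun _ => t)]
    simp only [Finset.mem_univ, if_pos, ht]
    linear_combination -r2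
  have hαβ : ∀ i, α i - β i = ω ![Sum.inr i, Sum.inl 0] := by
    intro i; rw [hα, hβ]; ring
  have hβα : ∀ i, β i - α i = ω ![Sum.inr i, Sum.inl 1] := by
    intro i
    rw [hα, hβ]
    have := r1 i
    ring_nf
    linear_combination -this
  have hb : pathBoundary F (Fin 2 ⊕ Fin n) 2 (Phi F n α β) = ω := by
    rw [bdry_Phi]
    funext w
    rw [hsumα, hsumβ]
    rw [Finset.sum_congr rfl (fun i _ => by rw [hαβ i, hβα i])]
    rcases ew0 : w 0 with c0 | j0 <;> rcases ew1 : w 1 with c1 | j1 <;>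
      rw [vec2_eta w, ew0, ew1]
    · -- inl, inl
      have hS : (∑ i, (ω ![Sum.inr i, Sum.inl 0]
            * (if ![(Sum.inr i : Fin 2 ⊕ Fin n), Sum.inl 0] = ![Sum.inl c0, Sum.inl c1] then (1:F) else 0)
          + ω ![Sum.inr i, Sum.inl 1]
            * (if ![(Sum.inr i : Fin 2 ⊕ Fin n), Sum.inl 1] = ![Sum.inl c0, Sum.inl c1] then (1:F) else 0))) = 0 :=
        Finset.sum_eq_zero fun i _ => by
          rw [if_neg (by rw [pair_eq_iff]; rintro ⟨h, -⟩; cases h),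
            if_neg (by rw [pair_eq_iff]; rintro ⟨h, -⟩; cases h),
            mul_zero, mul_zero, add_zero]
      simp only [hS, add_zero]
      rcases fin2_cases c0 with rfl | rfl <;> rcases fin2_cases c1 with rfl | rfl
      · rw [if_neg (by rw [pair_eq_iff]; rintro ⟨-, h⟩; simp at h),
          if_neg (by rw [pair_eq_iff]; rintro ⟨h, -⟩; simp at h)]
        rw [(hsupp ![Sum.inl 0, Sum.inl 0] (by rw [isAllowed_pair, arc_inl_inl]; simp))]
        ring
      · rw [if_pos rfl, if_neg (by rw [pair_eq_iff]; rintro ⟨h, -⟩; simp at h)]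
        ring
      · rw [if_neg (by rw [pair_eq_iff]; rintro ⟨h, -⟩; simp at h), if_pos rfl]
        ring
      · rw [if_neg (by rw [pair_eq_iff]; rintro ⟨h, -⟩; simp at h),
          if_neg (by rw [pair_eq_iff]; rintro ⟨-, h⟩; simp at h)]
        rw [(hsupp ![Sum.inl 1, Sum.inl 1] (by rw [isAllowed_pair, arc_inl_inl]; simp))]
        ring
    · -- inl, inr
      have hS : (∑ i, (ω ![Sum.inr i, Sum.inl 0]
            * (if ![(Sum.inr i : Fin 2 ⊕ Fin n), Sum.inl 0] = ![Sum.inl c0, Sum.inr j1] then (1:F) else 0)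
          + ω ![Sum.inr i, Sum.inl 1]
            * (if ![(Sum.inr i : Fin 2 ⊕ Fin n), Sum.inl 1] = ![Sum.inl c0, Sum.inr j1] then (1:F) else 0))) = 0 :=
        Finset.sum_eq_zero fun i _ => by
          rw [if_neg (by rw [pair_eq_iff]; rintro ⟨h, -⟩; cases h),
            if_neg (by rw [pair_eq_iff]; rintro ⟨h, -⟩; cases h),
            mul_zero, mul_zero, add_zero]
      simp only [hS]
      rw [if_neg (by rw [pair_eq_iff]; rintro ⟨-, h⟩; cases h),
        if_neg (by rw [pair_eq_iff]; rintro ⟨-, h⟩; cases h),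
        (hsupp ![Sum.inl c0, Sum.inr j1] (by rw [isAllowed_pair]; exact arc_inl_inr _ _))]
      ring
    · -- inr, inl
      rw [if_neg (by rw [pair_eq_iff]; rintro ⟨h, -⟩; cases h),
        if_neg (by rw [pair_eq_iff]; rintro ⟨h, -⟩; cases h)]
      have hcol : ∀ i : Fin n, (ω ![Sum.inr i, Sum.inl 0]
            * (if ![(Sum.inr i : Fin 2 ⊕ Fin n), Sum.inl 0] = ![Sum.inr j0, Sum.inl c1] then (1:F) else 0)
          + ω ![Sum.inr i, Sum.inl 1]
            * (if ![(Sum.inr i : Fin 2 ⊕ Fin n), Sum.inl 1] = ![Sum.inr j0, Sum.inl c1] then (1:F) else 0))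
          = (if i = j0 then ω ![Sum.inr j0, Sum.inl c1] else 0) := by
        intro i
        by_cases hij : i = j0
        · subst hij
          rcases fin2_cases c1 with rfl | rfl
          · rw [if_pos rfl, if_pos rfl,
              if_neg (by rw [pair_eq_iff]; rintro ⟨-, h⟩; simp at h)]
            ring
          · rw [if_pos rfl, if_pos rfl,
              if_neg (by rw [pair_eq_iff]; rintro ⟨-, h⟩; simp at h)]
            ring
        · rw [if_neg hij,
            if_neg (by rw [pair_eq_iff]; rintro ⟨h, -⟩; exact hij (Sum.inr.inj h)),
            if_neg (by rw [pair_eq_iff]; rintro ⟨h, -⟩; exact hij (Sum.inr.inj h))]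
          ring
      rw [Finset.sum_congr rfl (fun i _ => hcol i),
        Finset.sum_ite_eq' Finset.univ j0 (fun _ => ω ![Sum.inr j0, Sum.inl c1])]
      simp
    · -- inr, inr
      rw [if_neg (by rw [pair_eq_iff]; rintro ⟨h, -⟩; cases h),
        if_neg (by rw [pair_eq_iff]; rintro ⟨h, -⟩; cases h)]
      have hS : (∑ i, (ω ![Sum.inr i, Sum.inl 0]
            * (if ![(Sum.inr i : Fin 2 ⊕ Fin n), Sum.inl 0] = ![Sum.inr j0, Sum.inr j1] then (1:F) else 0)
          + ω ![Sum.inr i, Sum.inl 1]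
            * (if ![(Sum.inr i : Fin 2 ⊕ Fin n), Sum.inl 1] = ![Sum.inr j0, Sum.inr j1] then (1:F) else 0))) = 0 :=
        Finset.sum_eq_zero fun i _ => by
          rw [if_neg (by rw [pair_eq_iff]; rintro ⟨-, h⟩; cases h),
            if_neg (by rw [pair_eq_iff]; rintro ⟨-, h⟩; cases h),
            mul_zero, mul_zero, add_zero]
      simp only [hS]
      rw [(hsupp ![Sum.inr j0, Sum.inr j1] (by rw [isAllowed_pair]; exact arc_inr_inr _ _))]
      ring
  refine ⟨Phi F n α β, ⟨Phi_mem_allowed α β, ?_⟩, hb⟩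
  have hmem : Phi F n α β ∈ Submodule.comap (pathBoundary F (Fin 2 ⊕ Fin n) 2)
      (allowedSubmodule F (Fin 2 ⊕ Fin n) (downlinkArc n) 2) :=
    Submodule.mem_comap.mpr (by rw [hb]; exact hω.1.1)
  exact hmem

theorem betti_one (hn : 1 ≤ n) : betti F (Fin 2 ⊕ Fin n) (downlinkArc n) 1 = 0 := by
  haveI : Subsingleton (pathHomology F (Fin 2 ⊕ Fin n) (downlinkArc n) 1) := by
    rw [Submodule.Quotient.subsingleton_iff, Submodule.comap_subtype_eq_top]
    exact Z1_le_B1 hn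
  exact Module.finrank_zero_of_subsingleton

end H1
section H0

variable {F : Type} [Field F] {n : ℕ}

lemma single_eq_iff {V : Type} (u v : V) : (![u] = ![v]) ↔ u = v := by
  constructor
  · intro h; exact congrFun h 0
  · rintro rfl; rfl

lemma inv0_top (R V : Type) [CommRing R] [Fintype V] [DecidableEq V] (A : V → V → Prop) :
    invariantPaths R V A 0 = ⊤ := by
  rw [eq_top_iff]
  intro ω _
  exact ⟨fun x hx => absurd (isAllowed_single A x) hx,
    fun x hx => absurd (isAllowed_zero A x) hx⟩

noncomputable def sum0 (F : Type) [Field F] (n : ℕ) :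
    ((Fin 1 → Fin 2 ⊕ Fin n) → F) →ₗ[F] F where
  toFun f := ∑ w, f w
  map_add' f g := by simp [Finset.sum_add_distrib]
  map_smul' r f := by simp [Finset.mul_sum]

lemma sum_fin1 {M : Type} [AddCommMonoid M] (g : (Fin 2 ⊕ Fin n) → M) :
    (∑ w : Fin 1 → Fin 2 ⊕ Fin n, g (w 0)) = ∑ v, g v := by
  exact Fintype.sum_equiv (Equiv.funUnique (Fin 1) (Fin 2 ⊕ Fin n)) _ _ (fun w => rfl)

theorem B0_eq : pathBoundaries F (Fin 2 ⊕ Fin n) (downlinkArc n) 0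
    = LinearMap.ker (sum0 F n) := by
  ext f
  constructor
  · rintro ⟨ω, -, rfl⟩
    rw [LinearMap.mem_ker]
    show (∑ w, pathBoundary F (Fin 2 ⊕ Fin n) 1 ω w) = 0
    have hterm : ∀ w : Fin 1 → Fin 2 ⊕ Fin n, pathBoundary F (Fin 2 ⊕ Fin n) 1 ω w
        = (∑ v, ω ![v, w 0]) - (∑ v, ω ![w 0, v]) := by
      intro w
      rw [pathBoundary_apply, Fin.sum_univ_two]
      simp only [ins2_0, ins2_1, Fin.val_zero, Fin.val_one, pow_zero, pow_one,
        one_mul, neg_one_mul]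
      ring
    rw [Finset.sum_congr rfl (fun w _ => hterm w), Finset.sum_sub_distrib]
    rw [sum_fin1 (g := fun u => ∑ v, ω ![v, u]), sum_fin1 (g := fun u => ∑ v, ω ![u, v])]
    rw [Finset.sum_comm]
    exact sub_self _
  · intro hf
    have hf' : (∑ w, f w) = 0 := hf
    have hgsum : (∑ v : Fin 2 ⊕ Fin n, f ![v]) = 0 := by
      rw [← hf']
      rw [← sum_fin1 (g := fun v => f ![v])]
      exact Finset.sum_congr rfl fun w _ => congrArg f (vec1_eta w).symm
    set η : (Fin 2 → Fin 2 ⊕ Fin n) → F :=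
      f ![Sum.inl 1] • (fun y => if y = ![Sum.inl 0, Sum.inl 1] then (1:F) else 0)
      - ∑ i : Fin n, f ![Sum.inr i] • (fun y => if y = ![Sum.inr i, Sum.inl 0] then (1:F) else 0)
      with hη
    have hηsupp : η ∈ allowedSubmodule F (Fin 2 ⊕ Fin n) (downlinkArc n) 2 := by
      intro x hx
      have h1 : (if x = ![Sum.inl 0, Sum.inl 1] then (1:F) else 0) = 0 := by
        rw [if_neg]
        rintro rfl
        exact hx (by rw [isAllowed_pair, arc_inl_inl]; simp)
      have h2 : ∀ i : Fin n, (if x = ![Sum.inr i, Sum.inl 0] then (1:F) else 0) = 0 := by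
        intro i
        rw [if_neg]
        rintro rfl
        exact hx (by rw [isAllowed_pair]; exact arc_inr_inl _ _)
      show f ![Sum.inl 1] • (fun y => if y = ![Sum.inl 0, Sum.inl 1] then (1:F) else 0) x
        - (∑ i : Fin n, f ![Sum.inr i]
          • (fun y => if y = ![Sum.inr i, Sum.inl 0] then (1:F) else 0)) x = 0
      rw [Finset.sum_apply]
      rw [Finset.sum_eq_zero (fun i (_ : i ∈ Finset.univ) =>
        show (f ![Sum.inr i] • (fun y => if y = ![Sum.inr i, Sum.inl 0] then (1:F) else 0)) x = 0
        by simp only [Pi.smul_apply, smul_eq_mul, h2 i, mul_zero])]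
      simp only [Pi.smul_apply, smul_eq_mul, h1, mul_zero]
      ring
    have hbd : pathBoundary F (Fin 2 ⊕ Fin n) 1 η = f := by
      rw [hη, map_sub, map_smul, map_sum, bdry_delta2]
      rw [Finset.sum_congr rfl (fun i _ => by rw [map_smul, bdry_delta2])]
      funext w
      rw [vec1_eta w]
      rw [Pi.sub_apply, Pi.smul_apply, Finset.sum_apply, smul_eq_mul]
      rw [Finset.sum_congr rfl (fun i _ => by rw [Pi.smul_apply, smul_eq_mul])]
      rcases ew : w 0 with c | j <;> simp only [single_eq_iff]
      · rcases fin2_cases c with rfl | rfl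
        · simp only [show ((Sum.inl 1 : Fin 2 ⊕ Fin n) = Sum.inl 0) = False by
              simp, show ((Sum.inl 0 : Fin 2 ⊕ Fin n) = Sum.inl 0) = True by simp,
            show (∀ i : Fin n, ((Sum.inr i : Fin 2 ⊕ Fin n) = Sum.inl 0) = False) from
              fun i => by simp, if_true, if_false]
          rw [Finset.sum_congr rfl (fun i _ => by rw [mul_sub, mul_one, mul_zero]),
            Finset.sum_sub_distrib, Finset.sum_const_zero]
          have hexp : (∑ v : Fin 2 ⊕ Fin n, f ![v])
              = f ![Sum.inl 0] + f ![Sum.inl 1] + ∑ i : Fin n, f ![Sum.inr i] := by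
            rw [Fintype.sum_sum_type, Fin.sum_univ_two]
          rw [hexp] at hgsum
          linear_combination -hgsum
        · simp only [show ((Sum.inl 1 : Fin 2 ⊕ Fin n) = Sum.inl 1) = True by
              simp, show ((Sum.inl 0 : Fin 2 ⊕ Fin n) = Sum.inl 1) = False by simp,
            show (∀ i : Fin n, ((Sum.inr i : Fin 2 ⊕ Fin n) = Sum.inl 1) = False) from
              fun i => by simp, if_true, if_false]
          simp
      · simp only [show ((Sum.inl 1 : Fin 2 ⊕ Fin n) = Sum.inr j) = False by
            simp, show ((Sum.inl 0 : Fin 2 ⊕ Fin n) = Sum.inr j) = False by simp,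
          Sum.inr.injEq, if_false]
        rw [Finset.sum_congr rfl (fun i _ => by
          rw [zero_sub, mul_neg, mul_ite, mul_one, mul_zero])]
        rw [Finset.sum_neg_distrib]
        rw [Finset.sum_ite_eq' Finset.univ j (fun i => f ![Sum.inr i])]
        simp
    refine ⟨η, ⟨hηsupp, ?_⟩, hbd⟩
    have hmem : η ∈ Submodule.comap (pathBoundary F (Fin 2 ⊕ Fin n) 1)
        (allowedSubmodule F (Fin 2 ⊕ Fin n) (downlinkArc n) 1) :=
      Submodule.mem_comap.mpr (fun x hx => absurd (isAllowed_single _ x) hx)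
    exact hmem

lemma sum0_surj : Function.Surjective (sum0 F n) := by
  intro y
  refine ⟨Pi.single ![Sum.inl 0] y, ?_⟩
  show (∑ w, Pi.single (![Sum.inl 0] : Fin 1 → Fin 2 ⊕ Fin n) y w) = y
  simp [Pi.single_apply]

lemma finrank_B0 : Module.finrank F
    ↥(pathBoundaries F (Fin 2 ⊕ Fin n) (downlinkArc n) 0) = n + 1 := by
  rw [B0_eq]
  have h := LinearMap.finrank_range_add_finrank_ker (sum0 F n)
  rw [LinearMap.range_eq_top.mpr sum0_surj, finrank_top, Module.finrank_self,
    Module.finrank_pi, Fintype.card_fun] at h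
  simp only [Fintype.card_sum, Fintype.card_fin, Fintype.card_fun, zero_add, pow_one] at h
  exact Nat.add_left_cancel (h.trans (by omega))

set_option synthInstance.maxHeartbeats 1000000 in
set_option maxHeartbeats 1000000 in
theorem betti_zero : betti F (Fin 2 ⊕ Fin n) (downlinkArc n) 0 = 1 := by
  have hZ : pathCycles F (Fin 2 ⊕ Fin n) (downlinkArc n) 0 = ⊤ := inv0_top F _ _
  have hle : pathBoundaries F (Fin 2 ⊕ Fin n) (downlinkArc n) 0
      ≤ pathCycles F (Fin 2 ⊕ Fin n) (downlinkArc n) 0 := hZ ▸ le_top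
  have hq := Submodule.finrank_quotient_add_finrank
    ((pathBoundaries F (Fin 2 ⊕ Fin n) (downlinkArc n) 0).comap
      (pathCycles F (Fin 2 ⊕ Fin n) (downlinkArc n) 0).subtype)
  have e1 : Module.finrank F ↥((pathBoundaries F (Fin 2 ⊕ Fin n) (downlinkArc n) 0).comap
      (pathCycles F (Fin 2 ⊕ Fin n) (downlinkArc n) 0).subtype) = n + 1 := by
    rw [LinearEquiv.finrank_eq (Submodule.comapSubtypeEquivOfLe hle)]
    exact finrank_B0
  have e2 : Module.finrank F ↥(pathCycles F (Fin 2 ⊕ Fin n) (downlinkArc n) 0) = n + 2 := by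
    rw [hZ, finrank_top, Module.finrank_pi, Fintype.card_fun]
    simp only [Fintype.card_sum, Fintype.card_fin, zero_add, pow_one]
    omega
  rw [e1, e2] at hq
  have hq' := hq.trans (show n + 2 = 1 + (n + 1) by omega)
  exact Nat.add_right_cancel hq'

end H0
/-- For `n ≥ 1` and `W_n'` the `n`-downlinked mutual dyad, over any field
`β̃_2(W_n') = n − 1` and `β̃_p(W_n') = 0` for all `p ≥ 0` with `p ≠ 2`. -/
theorem downlinked_dyad_tildeBetti (F : Type) [Field F] (n : ℕ) (hn : 1 ≤ n) :
    tildeBetti F (Fin 2 ⊕ Fin n) (downlinkArc n) 2 = (n : ℤ) - 1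
    ∧ ∀ p : ℕ, p ≠ 2 → tildeBetti F (Fin 2 ⊕ Fin n) (downlinkArc n) p = 0 := by
  constructor
  · rw [tildeBetti, betti_two hn]
    simp only [if_neg (by norm_num : ¬ (2 = 0))]
    omega
  · intro p hp
    rcases p with _ | _ | _ | q
    · rw [tildeBetti, betti_zero]
      simp
    · rw [tildeBetti, betti_one hn]
      simp
    · exact absurd rfl hp
    · rw [tildeBetti, betti_high (q + 3) (by omega)]
      simp
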